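/- Let k be an algebraically closed field, G a finite group, A = ⊕_{g∈G} A_g a finite-dimensional G-graded k-algebra which is separably graded, and B = A#k[G]*. Then every finitely generated A-module Y is a direct summand of B⊗_A Y as A-modules, where the A-module structure on B⊗_A Y is via the embedding i: A ↪ B. -/

import Mathlib

open CategoryTheory CategoryTheory.Abelian TensorProduct

namespace Paper

section Smash

variable (k : Type) [Field k] {G : Type} [AddGroup G] [Fintype G] [DecidableEq G]
variable {A : Type} [Ring A] [Algebra k A]

/-- `B` is (a realization of) the smash product `A # k[G]*` of the `G`-graded
algebra `A = ⊕_g 𝒜_g` : as a `k`-vector space `B = ⊕_g A p_g ≅ (G → A)`, with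
multiplication `(a p_g)(b p_h) = a b_{g - h} p_h` (where `b_{g-h}` is the
degree-`(g - h)` homogeneous component of `b`; the group `G` is written
additively, so `g - h` is `gh⁻¹`), and unit `Σ_h 1·p_h`.  The canonical
embedding `i : A ↪ B`, `a ↦ Σ_h a p_h`, is recorded as the algebra
homomorphism `emb`. -/
structure IsSmashProduct (𝒜 : G → Submodule k A) [GradedAlgebra 𝒜]
    (B : Type) [Ring B] [Algebra k B] where
  equiv : B ≃ₗ[k] (G → A)
  mul_apply : ∀ (x y : B) (h : G),
    equiv (x * y) h = ∑ g : G, equiv x g * (DirectSum.decompose 𝒜 (equiv y h) (g - h) : A)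
  one_apply : ∀ h : G, equiv 1 h = 1
  emb : A →ₐ[k] B
  emb_apply : ∀ (a : A) (h : G), equiv (emb a) h = a

/-- A `G`-graded algebra is separably graded if there is a family `x : G → A` of
central elements of degree `0` (the identity component) with `Σ_g x g = 1` and
`r * x g = x (h + g) * r` for every homogeneous `r` of degree `h`. -/
def SeparablyGraded (𝒜 : G → Submodule k A) : Prop :=
  ∃ x : G → A, (∀ g, x g ∈ Subring.center A) ∧ (∀ g, x g ∈ 𝒜 0) ∧
    (∑ g : G, x g = 1) ∧
    ∀ (h : G) (r : A), r ∈ 𝒜 h → ∀ g : G, r * x g = x (h + g) * r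

end Smash

section Induced

variable {A B : Type} [Ring A] [Ring B]

/-- `N`, together with the structure map `η`, is the induced module `B ⊗_A L`
of the `A`-module `L` along the ring homomorphism `φ : A → B` : `η` is
`A`-equivariant and universal among `A`-equivariant additive maps from `L`
to `B`-modules. -/
def IsInducedModule (φ : A →+* B) (L : Type) [AddCommGroup L] [Module A L]
    (N : Type) [AddCommGroup N] [Module B N] (η : L →+ N) : Prop :=
  (∀ (a : A) (l : L), η (a • l) = φ a • η l) ∧
  ∀ (Z : ModuleCat.{0} B) (u : L →+ Z), (∀ (a : A) (l : L), u (a • l) = φ a • u l) →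
    ∃! v : N →+ Z, (∀ (b : B) (n : N), v (b • n) = b • v n) ∧ v.comp η = u

end Induced

section Aux

variable {A B : Type} [Ring A] [Ring B]

/-- `B` as an `A`-module via `φ`. -/
def BA (_φ : A →+* B) : Type := B

/-- The identity map `B → BA φ`. -/
def BA.mk (φ : A →+* B) (b : B) : BA φ := b

/-- The identity map `BA φ → B`. -/
def BA.out (φ : A →+* B) (b : BA φ) : B := b

instance (φ : A →+* B) : Ring (BA φ) := inferInstanceAs (Ring B)
instance (φ : A →+* B) : Module A (BA φ) := Module.compHom B φ

lemma BA.smul_def (φ : A →+* B) (a : A) (b : BA φ) : a • b = BA.mk φ (φ a) * b := rfl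

/-- Right multiplication by `b` as an `A`-linear endomorphism of `BA φ`. -/
def rmulBA (φ : A →+* B) (b : BA φ) : BA φ →ₗ[A] BA φ where
  toFun x := x * b
  map_add' x y := add_mul x y b
  map_smul' a x := by
    show BA.mk φ (φ a) * x * b = BA.mk φ (φ a) * (x * b); rw [mul_assoc]

variable (φ : A →+* B) (Y : Type) [AddCommGroup Y] [Module A Y]

instance dualModule : Module B (BA φ →ₗ[A] Y) where
  smul b f := f.comp (rmulBA φ (BA.mk φ b))
  one_smul f := by ext x; show f (x * 1) = f x; rw [mul_one]
  mul_smul b₁ b₂ f := by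
    ext x
    show f (x * (BA.mk φ b₁ * BA.mk φ b₂)) = f (x * BA.mk φ b₁ * BA.mk φ b₂)
    rw [mul_assoc]
  smul_zero b := by ext x; rfl
  smul_add b f g := by ext x; rfl
  add_smul b₁ b₂ f := by
    ext x
    show f (x * (BA.mk φ b₁ + BA.mk φ b₂)) = f (x * BA.mk φ b₁) + f (x * BA.mk φ b₂)
    rw [mul_add, map_add]
  zero_smul f := by ext x; show f (x * 0) = 0; rw [mul_zero, map_zero]

lemma dual_smul_apply (b : B) (f : BA φ →ₗ[A] Y) (x : BA φ) :
    (b • f) x = f (x * BA.mk φ b) := rfl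

end Aux

/-- Let `A` be a finite dimensional `G`-graded `k`-algebra which
is separably graded and `B = A # k[G]*`.  Every finitely generated `A`-module `Y`
is a direct summand of `B ⊗_A Y` as `A`-modules (the `A`-structure on `B ⊗_A Y`
being restriction along the embedding `i : A ↪ B`). -/
theorem stmt12 (k : Type) [Field k] [IsAlgClosed k]
    {G : Type} [AddGroup G] [Fintype G] [DecidableEq G]
    {A : Type} [Ring A] [Algebra k A] [FiniteDimensional k A]
    (𝒜 : G → Submodule k A) [GradedAlgebra 𝒜]
    (B : Type) [Ring B] [Algebra k B] (hB : IsSmashProduct k 𝒜 B)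
    (hsep : SeparablyGraded k 𝒜)
    (Y : ModuleCat.{0} A) (hY : Module.Finite A Y)
    (N : ModuleCat.{0} B) (η : Y →+ N) (hN : IsInducedModule hB.emb.toRingHom Y N η) :
    ∃ Z : ModuleCat.{0} A, Nonempty
      (((ModuleCat.restrictScalars hB.emb.toRingHom).obj N) ≃ₗ[A] (Y × Z)) := by
  classical
  obtain ⟨x, -, -, hxsum, hxcomm⟩ := hsep
  set φ : A →+* B := hB.emb.toRingHom with hφ
  have hφa : ∀ a : A, φ a = hB.emb a := fun a => rfl
  -- sum of all homogeneous components
  have hsum : ∀ z : A, ∑ g : G, (DirectSum.decompose 𝒜 z g : A) = z := by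
    intro z
    conv_rhs => rw [← DirectSum.sum_support_decompose 𝒜 z]
    exact (Finset.sum_subset (Finset.subset_univ _) (fun g _ hg => by
      rw [DFinsupp.notMem_support_iff.mp hg]; rfl)).symm
  have hre : ∀ (z : A) (h : G), ∑ g : G, (DirectSum.decompose 𝒜 z (g - h) : A) = z := by
    intro z h
    exact (Fintype.sum_equiv (Equiv.subRight h)
      (fun g => (DirectSum.decompose 𝒜 z (g - h) : A))
      (fun g => (DirectSum.decompose 𝒜 z g : A)) (fun g => rfl)).trans (hsum z)
  have hre2 : ∀ (z : A) (g : G), ∑ h : G, (DirectSum.decompose 𝒜 z (g - h) : A) = z := by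
    intro z g
    exact (Fintype.sum_equiv (Equiv.subLeft g)
      (fun h => (DirectSum.decompose 𝒜 z (g - h) : A))
      (fun h => (DirectSum.decompose 𝒜 z h : A)) (fun h => rfl)).trans (hsum z)
  -- the splitting map ε : B → A
  set ε : B → A := fun b => ∑ g : G, hB.equiv b g * x g with hε
  have hεadd : ∀ b c : B, ε (b + c) = ε b + ε c := by
    intro b c
    simp only [hε, map_add, Pi.add_apply, add_mul, Finset.sum_add_distrib]
  have hε1 : ε 1 = 1 := by
    simp only [hε, hB.one_apply, one_mul, hxsum]
  have hεl : ∀ (a : A) (b : B), ε (φ a * b) = a * ε b := by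
    intro a b
    have hcomp : ∀ h : G, hB.equiv (φ a * b) h = a * hB.equiv b h := by
      intro h
      rw [hφa, hB.mul_apply]
      simp only [hB.emb_apply]
      rw [← Finset.mul_sum, hre (hB.equiv b h) h]
    show ∑ g : G, hB.equiv (φ a * b) g * x g = a * ∑ g : G, hB.equiv b g * x g
    rw [Finset.mul_sum]
    exact Finset.sum_congr rfl fun g _ => by rw [hcomp, mul_assoc]
  have hεr : ∀ (b : B) (a : A), ε (b * φ a) = ε b * a := by
    intro b a
    have key : ∀ h : G, hB.equiv (b * φ a) h
        = ∑ g : G, hB.equiv b g * (DirectSum.decompose 𝒜 a (g - h) : A) := by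
      intro h
      rw [hφa, hB.mul_apply]
      simp only [hB.emb_apply]
    show ∑ h : G, hB.equiv (b * φ a) h * x h = (∑ g : G, hB.equiv b g * x g) * a
    calc ∑ h : G, hB.equiv (b * φ a) h * x h
        = ∑ h : G, ∑ g : G,
            hB.equiv b g * x g * (DirectSum.decompose 𝒜 a (g - h) : A) := by
          refine Finset.sum_congr rfl fun h _ => ?_
          rw [key, Finset.sum_mul]
          refine Finset.sum_congr rfl fun g _ => ?_
          rw [mul_assoc, mul_assoc,
            hxcomm (g - h) _ (SetLike.coe_mem (DirectSum.decompose 𝒜 a (g - h))) h,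
            sub_add_cancel]
      _ = ∑ g : G, hB.equiv b g * x g * ∑ h : G, (DirectSum.decompose 𝒜 a (g - h) : A) := by
          rw [Finset.sum_comm]
          exact Finset.sum_congr rfl fun g _ => (Finset.mul_sum _ _ _).symm
      _ = ∑ g : G, hB.equiv b g * x g * a := by
          exact Finset.sum_congr rfl fun g _ => by rw [hre2]
      _ = (∑ g : G, hB.equiv b g * x g) * a := by rw [Finset.sum_mul]
  -- the B-module Z₀ = Hom_A(B, Y)
  set Z0 : Type := BA φ →ₗ[A] Y with hZ0
  -- the map u : Y → Z₀
  have hsmulBA : ∀ (a : A) (b : BA φ), a • b = BA.mk φ (φ a) * b := fun a b => rfl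
  set uf : Y → Z0 := fun y =>
    { toFun := fun b => ε b • y
      map_add' := fun b c => by
        show ε (BA.out φ b + BA.out φ c) • y = ε b • y + ε c • y
        rw [hεadd, add_smul]; rfl
      map_smul' := fun a b => by
        show ε (φ a * BA.out φ b) • y = a • (ε (BA.out φ b) • y)
        rw [hεl, mul_smul] } with huf
  set u : Y →+ Z0 :=
    { toFun := uf
      map_zero' := by
        ext b
        show ε b • (0 : Y) = 0
        rw [smul_zero]
      map_add' := fun y y' => by
        ext b
        show ε b • (y + y') = ε b • y + ε b • y'
        rw [smul_add] } with hu'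
  have hu : ∀ (a : A) (l : Y), u (a • l) = φ a • u l := by
    intro a l
    ext b
    show ε (BA.out φ b) • (a • l) = ε (BA.out φ b * φ a) • l
    rw [hεr, mul_smul]
  obtain ⟨v0, ⟨hvB0, hvη⟩, -⟩ := hN.2 (ModuleCat.of B Z0) u hu
  set v : N → Z0 := fun n => v0 n with hv
  have hvadd : ∀ m n : N, v (m + n) = v m + v n := fun m n => map_add v0 m n
  have hvB : ∀ (b : B) (n : N), v (b • n) = b • v n := hvB0
  have hvη' : ∀ y : Y, v (η y) = u y := fun y => DFunLike.congr_fun hvη y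
  -- the retraction π : N → Y
  set π : ((ModuleCat.restrictScalars φ).obj N) →ₗ[A] Y :=
    { toFun := fun n => v n (1 : BA φ)
      map_add' := fun m n => by
        show v ((m : N) + (n : N)) (1 : BA φ) = v m (1 : BA φ) + v n (1 : BA φ)
        exact congrArg (fun f : Z0 => f (1 : BA φ)) (hvadd m n)
      map_smul' := fun a n => by
        show v (φ a • n) (1 : BA φ) = a • v n (1 : BA φ)
        refine (congrArg (fun f : Z0 => f (1 : BA φ)) (hvB (φ a) n)).trans ?_
        show v n ((1 : BA φ) * BA.mk φ (φ a)) = a • v n (1 : BA φ)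
        rw [one_mul]
        have h2 := (v n).map_smul a (1 : BA φ)
        rw [hsmulBA, mul_one] at h2
        exact h2 } with hπ
  set ηl : Y →ₗ[A] ((ModuleCat.restrictScalars φ).obj N) :=
    { toFun := η
      map_add' := fun y y' => map_add η y y'
      map_smul' := fun a y => hN.1 a y } with hηl
  have hπη : ∀ y : Y, π (ηl y) = y := by
    intro y
    show v (η y) (1 : BA φ) = y
    rw [hvη']
    show ε (1 : B) • y = y
    rw [hε1, one_smul]
  refine ⟨ModuleCat.of A (LinearMap.ker π), ⟨?_⟩⟩
  refine
    { toFun := fun n => (π n, ⟨n - ηl (π n), by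
        rw [LinearMap.mem_ker, map_sub, hπη, sub_self]⟩)
      invFun := fun p => ηl p.1 + p.2.1
      map_add' := fun m n => by
        refine Prod.ext (map_add π m n) (Subtype.ext ?_)
        show (m + n) - ηl (π (m + n)) = (m - ηl (π m)) + (n - ηl (π n))
        rw [map_add, map_add]
        abel
      map_smul' := fun a n => by
        refine Prod.ext (map_smul π a n) (Subtype.ext ?_)
        show a • n - ηl (π (a • n)) = a • (n - ηl (π n))
        rw [map_smul, map_smul, smul_sub]
      left_inv := fun n => by
        show ηl (π n) + (n - ηl (π n)) = n
        abel
      right_inv := fun p => by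
        refine Prod.ext ?_ (Subtype.ext ?_)
        · show π (ηl p.1 + p.2.1) = p.1
          rw [map_add, hπη, LinearMap.mem_ker.mp p.2.2, add_zero]
        · show ηl p.1 + p.2.1 - ηl (π (ηl p.1 + p.2.1)) = p.2.1
          rw [map_add, hπη, LinearMap.mem_ker.mp p.2.2, add_zero]
          abel }

end Paper
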